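/- For κ ∈ (−∞, 1] define D_κ : [0,1] → ℝ by D_κ(s) = (1/(√κ·π))·arcsin(√κ·sin(πs)) if 0 < κ ≤ 1, D_κ(s) = (1/π)·sin(πs) if κ = 0, and D_κ(s) = (1/(√(−κ)·π))·arcsinh(√(−κ)·sin(πs)) if κ < 0. Then for every κ ∈ (−∞, 1], the magnitude |C_{ℓ,κ}| := (∫_0^1 exp(−ℓ·D_κ(s)) ds)^{−1} of the circle of circumference ℓ with the κ-metric satisfies |C_{ℓ,κ}| − ℓ/2 → 0 as ℓ → ∞. -/

import Mathlib

set_option maxHeartbeats 1000000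

open Filter Topology Real Set intervalIntegral

lemma aux_arsinh_lower {x : ℝ} (hx : 0 ≤ x) : x - x ^ 3 / 6 ≤ Real.arsinh x := by
  set f : ℝ → ℝ := fun z => Real.arsinh z - z + z ^ 3 / 6 with hf
  have hderiv : ∀ y : ℝ, HasDerivAt f ((Real.sqrt (1 + y ^ 2))⁻¹ - 1 + y ^ 2 / 2) y := by
    intro y
    have h1 := Real.hasDerivAt_arsinh y
    have h2 : HasDerivAt (fun z : ℝ => z ^ 3 / 6) (y ^ 2 / 2) y := by
      have := (hasDerivAt_pow 3 y).div_const 6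
      exact this.congr_deriv (by push_cast; ring)
    have := (h1.sub (hasDerivAt_id y)).add h2
    exact this
  have hmono : Monotone f := by
    apply monotone_of_deriv_nonneg (fun y => (hderiv y).differentiableAt)
    intro y
    rw [(hderiv y).deriv]
    set r := Real.sqrt (1 + y ^ 2) with hr
    have hr2 : r ^ 2 = 1 + y ^ 2 := Real.sq_sqrt (by positivity)
    have hr1 : 1 ≤ r := by nlinarith [Real.sqrt_nonneg (1 + y ^ 2)]
    have hrpos : 0 < r := lt_of_lt_of_le one_pos hr1
    have key : 0 ≤ r ^ 3 - 3 * r + 2 := by nlinarith [sq_nonneg (r - 1)]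
    have hy2 : y ^ 2 = r ^ 2 - 1 := by linarith
    have heq : r⁻¹ - 1 + y ^ 2 / 2 = (r ^ 3 - 3 * r + 2) / (2 * r) := by
      rw [hy2]; field_simp; ring
    rw [heq]
    positivity
  have h0 : f 0 = 0 := by simp [hf]
  have := hmono hx
  rw [h0] at this
  simp only [hf] at this
  linarith

lemma aux_exp_integral (c b : ℝ) (hc : c ≠ 0) :
    ∫ s in (0:ℝ)..b, Real.exp (-c * s) = (1 - Real.exp (-c * b)) / c := by
  have hF : ∀ s : ℝ, HasDerivAt (fun u : ℝ => -Real.exp (-c * u) / c) (Real.exp (-c * s)) s := by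
    intro s
    have h1 : HasDerivAt (fun u : ℝ => -c * u) (-c) s := by
      simpa using (hasDerivAt_id s).const_mul (-c)
    have h2 := (h1.exp.neg).div_const c
    exact h2.congr_deriv (by field_simp)
  rw [integral_eq_sub_of_hasDerivAt (fun s _ => hF s)
    ((Real.continuous_exp.comp (continuous_const.mul continuous_id)).intervalIntegrable 0 b)]
  simp
  ring

lemma aux_min_integral (c : ℝ) (hc : 0 < c) :
    ∫ s in (0:ℝ)..1, Real.exp (-c * min s (1 - s)) = 2 / c * (1 - Real.exp (-c / 2)) := by
  have hcont : Continuous fun s : ℝ => Real.exp (-c * min s (1 - s)) := by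
    apply Real.continuous_exp.comp
    exact continuous_const.mul (continuous_id.min (continuous_const.sub continuous_id))
  have hsplit := integral_add_adjacent_intervals (a := (0:ℝ)) (b := 1/2) (c := 1) (μ := MeasureTheory.volume)
    (hcont.intervalIntegrable _ _) (hcont.intervalIntegrable _ _)
  have h1 : ∫ s in (0:ℝ)..(1/2), Real.exp (-c * min s (1 - s))
      = ∫ s in (0:ℝ)..(1/2), Real.exp (-c * s) := by
    apply integral_congr
    intro s hs
    rw [Set.uIcc_of_le (by norm_num : (0:ℝ) ≤ 1/2)] at hs
    obtain ⟨h1s, h2s⟩ := hs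
    simp only
    rw [min_eq_left (by linarith)]
  have h2 : ∫ s in (1/2:ℝ)..1, Real.exp (-c * min s (1 - s))
      = ∫ s in (0:ℝ)..(1/2), Real.exp (-c * s) := by
    have : ∫ s in (1/2:ℝ)..1, Real.exp (-c * min s (1 - s))
        = ∫ s in (1/2:ℝ)..1, Real.exp (-c * (1 - s)) := by
      apply integral_congr
      intro s hs
      rw [Set.uIcc_of_le (by norm_num : (1/2:ℝ) ≤ 1)] at hs
      obtain ⟨h1s, h2s⟩ := hs
      simp only
      rw [min_eq_right (by linarith)]
    rw [this]
    have := intervalIntegral.integral_comp_sub_left (a := (1/2:ℝ)) (b := 1)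
      (fun u => Real.exp (-c * u)) 1
    rw [this]
    norm_num
  rw [← hsplit, h1, h2, aux_exp_integral c (1/2) (ne_of_gt hc)]
  rw [show -c * (1/2) = -c/2 by ring, show -c/2 = -(c/2) by ring]
  ring

lemma aux_cube_exp {x : ℝ} (hx : 0 ≤ x) : x ^ 3 * Real.exp (-x) ≤ 27 := by
  have h1 : x / 3 ≤ Real.exp (x / 3) := by
    have := Real.add_one_le_exp (x / 3)
    linarith
  have h2 : (x / 3) ^ 3 ≤ Real.exp (x / 3) ^ 3 := by
    apply pow_le_pow_left₀ (by positivity) h1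
  have h3 : Real.exp (x / 3) ^ 3 = Real.exp x := by
    rw [← Real.exp_nat_mul]
    norm_num
    ring_nf
  have hexp : x ^ 3 ≤ 27 * Real.exp x := by
    rw [h3] at h2
    nlinarith
  calc x ^ 3 * Real.exp (-x) ≤ (27 * Real.exp x) * Real.exp (-x) := by
        have := Real.exp_nonneg (-x)
        nlinarith
    _ = 27 := by rw [mul_assoc, ← Real.exp_add]; simp

lemma aux_sin_concave {a x : ℝ} (ha0 : 0 ≤ a) (ha1 : a ≤ 1) (hx0 : 0 ≤ x) (hxpi : x ≤ π) :
    a * Real.sin x ≤ Real.sin (a * x) := by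
  have h := strictConcaveOn_sin_Icc.concaveOn.2 (Set.mem_Icc.2 ⟨le_refl 0, Real.pi_pos.le⟩)
    (Set.mem_Icc.2 ⟨hx0, hxpi⟩) (by linarith : (0:ℝ) ≤ 1 - a) ha0 (by ring)
  simp only [smul_eq_mul, mul_zero, Real.sin_zero, zero_add, add_zero] at h
  linarith [h]

lemma aux_tendsto_pow_exp (a : ℝ) (ha : 0 < a) (n : ℕ) :
    Tendsto (fun ℓ : ℝ => ℓ ^ n * Real.exp (-(a * ℓ))) atTop (𝓝 0) := by
  have h1 : Tendsto (fun ℓ : ℝ => a * ℓ) atTop atTop :=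
    Tendsto.const_mul_atTop ha tendsto_id
  have h2 := (tendsto_pow_mul_exp_neg_atTop_nhds_zero n).comp h1
  have h3 : Tendsto (fun ℓ : ℝ => (a ^ n)⁻¹ * ((a * ℓ) ^ n * Real.exp (-(a * ℓ)))) atTop
      (𝓝 ((a ^ n)⁻¹ * 0)) := h2.const_mul _
  rw [mul_zero] at h3
  apply h3.congr
  intro ℓ
  rw [mul_pow]
  field_simp

lemma magnitude_limit (g F : ℝ → ℝ) (C : ℝ) (hC : 1 ≤ C)
    (hg : ∀ s, g s = F (Real.sin (π * s)))
    (hFmono : MonotoneOn F (Set.Icc 0 1))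
    (hFcont : Continuous F)
    (hF1 : ∀ x, 0 ≤ x → x ≤ π / 2 → F (Real.sin x) ≤ x / π)
    (hF2 : ∀ x, 0 ≤ x → x ≤ 1 → x / π - C * (x / π) ^ 3 ≤ F (Real.sin x)) :
    Tendsto (fun ℓ : ℝ => (∫ s in (0:ℝ)..1, Real.exp (-ℓ * g s))⁻¹ - ℓ / 2) atTop (𝓝 0) := by
  have hπ : (0:ℝ) < π := Real.pi_pos
  have hπ2 : (2:ℝ) ≤ π := Real.two_le_pi
  have hCpos : (0:ℝ) < C := lt_of_lt_of_le one_pos hC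
  set δ : ℝ := min (1/π) (1/(1+C)) with hδdef
  have hδpos : 0 < δ := lt_min (by positivity) (by positivity)
  have hδπ : δ * π ≤ 1 := by
    have h := min_le_left (1/π) (1/(1+C))
    rw [← hδdef] at h
    calc δ * π ≤ (1/π) * π := by nlinarith
      _ = 1 := by field_simp
  have hδhalf : δ ≤ 1/2 := by nlinarith
  have hCδ : C * δ^2 ≤ 1/4 := by
    have h1 : δ * (1+C) ≤ 1 := by
      have h := min_le_right (1/π) (1/(1+C))
      rw [← hδdef] at h
      calc δ * (1+C) ≤ (1/(1+C)) * (1+C) := by nlinarith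
        _ = 1 := by field_simp
    nlinarith [hδpos.le, hCpos.le, sq_nonneg (1 - C*δ)]
  have hgcont : Continuous g := by
    have : g = fun s => F (Real.sin (π * s)) := funext hg
    rw [this]
    exact hFcont.comp (Real.continuous_sin.comp (continuous_const.mul continuous_id))
  have hsin : ∀ s : ℝ, 0 ≤ s → s ≤ 1 → Real.sin (π * s) = Real.sin (π * min s (1-s)) := by
    intro s h0 h1
    rcases le_total s (1/2) with h | h
    · rw [min_eq_left (by linarith)]
    · rw [min_eq_right (by linarith), show π * (1-s) = π - π * s by ring, Real.sin_pi_sub]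
  have hmin2 : ∀ s : ℝ, 0 ≤ s → s ≤ 1 → min s (1-s) ≤ 1/2 := by
    intro s h0 h1
    rcases le_total s (1/2) with h | h
    · exact (min_le_left _ _).trans h
    · exact (min_le_right _ _).trans (by linarith)
  -- P1 : g is at most the min distance
  have P1 : ∀ s : ℝ, 0 ≤ s → s ≤ 1 → g s ≤ min s (1-s) := by
    intro s h0 h1
    have hm0 : (0:ℝ) ≤ min s (1-s) := le_min h0 (by linarith)
    have hm2 := hmin2 s h0 h1
    have h := hF1 (π * min s (1-s)) (by positivity) (by nlinarith)
    rw [hg, hsin s h0 h1]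
    calc F (Real.sin (π * min s (1-s))) ≤ π * min s (1-s) / π := h
      _ = min s (1-s) := by field_simp
  -- P2 : cubic lower bound, valid whenever π * m ≤ 1
  have P2 : ∀ m : ℝ, 0 ≤ m → π * m ≤ 1 → m - C * m^3 ≤ F (Real.sin (π * m)) := by
    intro m h0 h1
    have h := hF2 (π * m) (by positivity) h1
    have he : π * m / π = m := by field_simp
    rw [he] at h
    exact h
  -- P3 : monotonicity in the min distance
  have P3 : ∀ s : ℝ, 0 ≤ s → s ≤ 1 → δ ≤ min s (1-s) → F (Real.sin (π * δ)) ≤ g s := by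
    intro s h0 h1 hδm
    have hm2 := hmin2 s h0 h1
    rw [hg, hsin s h0 h1]
    have hsδ0 : 0 ≤ Real.sin (π * δ) :=
      Real.sin_nonneg_of_nonneg_of_le_pi (mul_nonneg hπ.le hδpos.le) (by nlinarith)
    have hsm0 : 0 ≤ Real.sin (π * min s (1-s)) :=
      Real.sin_nonneg_of_nonneg_of_le_pi (mul_nonneg hπ.le (le_min h0 (by linarith))) (by nlinarith)
    apply hFmono (Set.mem_Icc.2 ⟨hsδ0, Real.sin_le_one _⟩)
      (Set.mem_Icc.2 ⟨hsm0, Real.sin_le_one _⟩)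
    apply Real.sin_le_sin_of_le_of_le_pi_div_two (by nlinarith) (by nlinarith) (by nlinarith)
  -- positive lower bound for g away from the endpoints
  have Pδ : ∀ s : ℝ, 0 ≤ s → s ≤ 1 → δ ≤ min s (1-s) → δ/2 ≤ g s := by
    intro s h0 h1 hδm
    have h2 := P2 δ hδpos.le (by nlinarith)
    have h3 : δ/2 ≤ δ - C * δ^3 := by nlinarith [hδpos.le]
    linarith [P3 s h0 h1 hδm]
  -- the integral
  set I : ℝ → ℝ := fun ℓ => ∫ s in (0:ℝ)..1, Real.exp (-ℓ * g s) with hIdef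
  have hint : ∀ ℓ : ℝ, IntervalIntegrable (fun s => Real.exp (-ℓ * g s))
      MeasureTheory.volume 0 1 :=
    fun ℓ => (Real.continuous_exp.comp ((continuous_const.mul hgcont))).intervalIntegrable 0 1
  have hmincont : ∀ c : ℝ, Continuous fun s : ℝ => Real.exp (-c * min s (1-s)) := by
    intro c
    exact Real.continuous_exp.comp
      (continuous_const.mul (continuous_id.min (continuous_const.sub continuous_id)))
  -- lower bound
  have hlow : ∀ ℓ : ℝ, 0 < ℓ → 2/ℓ * (1 - Real.exp (-ℓ/2)) ≤ I ℓ := by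
    intro ℓ hℓ
    rw [← aux_min_integral ℓ hℓ]
    apply integral_mono_on (by norm_num) ((hmincont ℓ).intervalIntegrable 0 1) (hint ℓ)
    intro s hs
    obtain ⟨h0, h1⟩ := hs
    have := P1 s h0 h1
    apply Real.exp_le_exp.2
    nlinarith
  -- upper bound
  have hup : ∀ ℓ : ℝ, 0 < ℓ → I ℓ ≤ 2/ℓ + 1728*C/ℓ^3 + Real.exp (-(δ/2) * ℓ) := by
    intro ℓ hℓ
    set RHS : ℝ → ℝ := fun s =>
      Real.exp (-ℓ * min s (1-s)) + (216*C/ℓ^2) * Real.exp (-(ℓ/4) * min s (1-s))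
        + Real.exp (-(δ/2) * ℓ) with hRHS
    have hRHScont : Continuous RHS := by
      apply ((hmincont ℓ).add ((continuous_const).mul (hmincont (ℓ/4)))).add continuous_const
    have hpoint : ∀ s ∈ Set.Icc (0:ℝ) 1, Real.exp (-ℓ * g s) ≤ RHS s := by
      intro s hs
      obtain ⟨h0, h1⟩ := hs
      set m := min s (1-s) with hm
      have hm0 : (0:ℝ) ≤ m := le_min h0 (by linarith)
      have hm2 := hmin2 s h0 h1
      have hterm2 : 0 ≤ (216*C/ℓ^2) * Real.exp (-(ℓ/4) * m) := by positivity
      have hterm1 : 0 ≤ Real.exp (-ℓ * m) := (Real.exp_pos _).le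
      have hterm3 : 0 ≤ Real.exp (-(δ/2) * ℓ) := (Real.exp_pos _).le
      rcases le_or_gt m δ with hmδ | hmδ
      · -- near the endpoints
        have hP2 : m - C * m^3 ≤ g s := by
          have := P2 m hm0 (by nlinarith)
          rw [hg, hsin s h0 h1]
          exact this
        have hCm : C * m^2 ≤ 1/4 := by
          have hmm : m^2 ≤ δ^2 := by nlinarith
          nlinarith [mul_le_mul_of_nonneg_left hmm hCpos.le]
        have key1 : Real.exp (-ℓ * g s) ≤ Real.exp (-ℓ * (m - C * m^3)) := by
          apply Real.exp_le_exp.2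
          have := mul_le_mul_of_nonneg_left hP2 hℓ.le
          linarith
        have key2 : Real.exp (-ℓ * (m - C * m^3))
            ≤ Real.exp (-ℓ * m) + (ℓ*C*m^3) * Real.exp (-ℓ * (m - C * m^3)) := by
          have e1 : Real.exp (-ℓ * m)
              = Real.exp (-ℓ * (m - C * m^3)) * Real.exp (-(ℓ*C*m^3)) := by
            rw [← Real.exp_add]; ring_nf
          have e2 : 1 - ℓ*C*m^3 ≤ Real.exp (-(ℓ*C*m^3)) := by
            have := Real.add_one_le_exp (-(ℓ*C*m^3)); linarith
          have hint2 : Real.exp (-ℓ * (m - C * m^3)) * (1 - ℓ*C*m^3)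
              ≤ Real.exp (-ℓ * (m - C * m^3)) * Real.exp (-(ℓ*C*m^3)) :=
            mul_le_mul_of_nonneg_left e2 (Real.exp_pos _).le
          rw [e1]
          nlinarith [hint2]
        have key3 : (ℓ*C*m^3) * Real.exp (-ℓ * (m - C * m^3))
            ≤ (216*C/ℓ^2) * Real.exp (-(ℓ/4) * m) := by
          have hsplit : Real.exp (-ℓ * (m - C * m^3))
              ≤ Real.exp (-(ℓ/2) * m) * Real.exp (-(ℓ/4) * m) := by
            rw [← Real.exp_add]
            apply Real.exp_le_exp.2
            have h34 : ℓ * ((3/4) * m) ≤ ℓ * (m - C * m^3) := by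
              apply mul_le_mul_of_nonneg_left _ hℓ.le
              nlinarith
            linarith
          have hcube := aux_cube_exp (x := ℓ/2 * m) (by positivity)
          have h5 : ℓ^3 * (m^3 * Real.exp (-(ℓ/2) * m)) ≤ 216 := by
            have he : (ℓ/2*m)^3 * Real.exp (-(ℓ/2*m)) = ℓ^3 * (m^3 * Real.exp (-(ℓ/2) * m)) / 8 := by
              rw [show -(ℓ/2*m) = -(ℓ/2) * m by ring]
              ring
            rw [he] at hcube
            linarith
          have h6 : m^3 * Real.exp (-(ℓ/2) * m) ≤ 216/ℓ^3 := by
            rw [le_div_iff₀ (by positivity)]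
            nlinarith [h5]
          calc (ℓ*C*m^3) * Real.exp (-ℓ * (m - C * m^3))
              ≤ (ℓ*C*m^3) * (Real.exp (-(ℓ/2) * m) * Real.exp (-(ℓ/4) * m)) := by
                apply mul_le_mul_of_nonneg_left hsplit (by positivity)
            _ = (ℓ*C) * (m^3 * Real.exp (-(ℓ/2) * m)) * Real.exp (-(ℓ/4) * m) := by ring
            _ ≤ (ℓ*C) * (216/ℓ^3) * Real.exp (-(ℓ/4) * m) := by
                apply mul_le_mul_of_nonneg_right _ (Real.exp_pos _).le
                apply mul_le_mul_of_nonneg_left h6 (by positivity)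
            _ = (216*C/ℓ^2) * Real.exp (-(ℓ/4) * m) := by
                field_simp
        rw [hRHS]
        simp only [← hm]
        linarith
      · -- away from the endpoints
        have hgδ : δ/2 ≤ g s := Pδ s h0 h1 hmδ.le
        have : Real.exp (-ℓ * g s) ≤ Real.exp (-(δ/2) * ℓ) := by
          apply Real.exp_le_exp.2
          nlinarith
        rw [hRHS]
        simp only [← hm]
        linarith
    have hIle : I ℓ ≤ ∫ s in (0:ℝ)..1, RHS s := by
      apply integral_mono_on (by norm_num) (hint ℓ) (hRHScont.intervalIntegrable 0 1) hpoint
    have hRHSval : ∫ s in (0:ℝ)..1, RHS s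
        = 2/ℓ * (1 - Real.exp (-ℓ/2)) + (216*C/ℓ^2) * (2/(ℓ/4) * (1 - Real.exp (-(ℓ/4)/2)))
          + Real.exp (-(δ/2) * ℓ) := by
      simp only [hRHS]
      rw [integral_add (f := fun s => Real.exp (-ℓ * min s (1-s)) + (216*C/ℓ^2) * Real.exp (-(ℓ/4) * min s (1-s))) (g := fun _ => Real.exp (-(δ/2) * ℓ)) (((hmincont ℓ).add ((continuous_const).mul (hmincont (ℓ/4)))).intervalIntegrable 0 1)
        (continuous_const.intervalIntegrable 0 1)]
      rw [integral_add (f := fun s => Real.exp (-ℓ * min s (1-s))) (g := fun s => (216*C/ℓ^2) * Real.exp (-(ℓ/4) * min s (1-s))) ((hmincont ℓ).intervalIntegrable 0 1)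
        ((continuous_const.mul (hmincont (ℓ/4))).intervalIntegrable 0 1)]
      rw [integral_const_mul, aux_min_integral ℓ hℓ, aux_min_integral (ℓ/4) (by positivity)]
      simp
    rw [hRHSval] at hIle
    have hb1 : 2/ℓ * (1 - Real.exp (-ℓ/2)) ≤ 2/ℓ := by
      have := (Real.exp_pos (-ℓ/2)).le
      have h2ℓ : (0:ℝ) < 2/ℓ := by positivity
      nlinarith
    have hb2 : (216*C/ℓ^2) * (2/(ℓ/4) * (1 - Real.exp (-(ℓ/4)/2))) ≤ 1728*C/ℓ^3 := by
      have := (Real.exp_pos (-(ℓ/4)/2)).le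
      have h1 : 2/(ℓ/4) * (1 - Real.exp (-(ℓ/4)/2)) ≤ 8/ℓ := by
        have h2ℓ : (0:ℝ) < 8/ℓ := by positivity
        have : 2/(ℓ/4) = 8/ℓ := by field_simp; ring
        nlinarith
      calc (216*C/ℓ^2) * (2/(ℓ/4) * (1 - Real.exp (-(ℓ/4)/2)))
          ≤ (216*C/ℓ^2) * (8/ℓ) := by
            apply mul_le_mul_of_nonneg_left h1 (by positivity)
        _ = 1728*C/ℓ^3 := by field_simp; ring
    linarith
  -- final squeeze
  set B : ℝ → ℝ := fun ℓ =>
    ℓ * Real.exp (-((1:ℝ)/2 * ℓ)) + 864*C/ℓ + (1/2) * (ℓ^2 * Real.exp (-(δ/2 * ℓ))) with hB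
  have hBtend : Tendsto B atTop (𝓝 0) := by
    have t1 : Tendsto (fun ℓ : ℝ => ℓ * Real.exp (-((1:ℝ)/2 * ℓ))) atTop (𝓝 0) := by
      simpa using aux_tendsto_pow_exp (1/2) (by norm_num) 1
    have t2 : Tendsto (fun ℓ : ℝ => 864*C/ℓ) atTop (𝓝 0) :=
      Tendsto.div_atTop tendsto_const_nhds tendsto_id
    have t3 := (aux_tendsto_pow_exp (δ/2) (by positivity) 2).const_mul (1/2:ℝ)
    rw [mul_zero] at t3
    have hsum := (t1.add t2).add t3
    simpa only [add_zero] using hsum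
  apply squeeze_zero_norm' _ hBtend
  filter_upwards [eventually_ge_atTop (2:ℝ)] with ℓ hℓ2
  have hℓ : (0:ℝ) < ℓ := by linarith
  have hIlow := hlow ℓ hℓ
  have hIup := hup ℓ hℓ
  have hexphalf : Real.exp (-ℓ/2) ≤ 1/2 := by
    have h1 : Real.exp (-ℓ/2) ≤ Real.exp (-1) := Real.exp_le_exp.2 (by linarith)
    have h2 : Real.exp (-1) ≤ 1/2 := by
      rw [Real.exp_neg]
      rw [inv_le_comm₀ (Real.exp_pos 1) (by norm_num)]
      have := Real.add_one_le_exp (1:ℝ)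
      linarith
    linarith
  have hIpos : 1/ℓ ≤ I ℓ := by
    have h2ℓ : (0:ℝ) < 2/ℓ := by positivity
    calc 1/ℓ = 2/ℓ * (1/2) := by ring
      _ ≤ 2/ℓ * (1 - Real.exp (-ℓ/2)) := by nlinarith
      _ ≤ I ℓ := hIlow
  have hIpos' : 0 < I ℓ := lt_of_lt_of_le (by positivity) hIpos
  have habs : |2 - ℓ * I ℓ| ≤ 2 * Real.exp (-ℓ/2) + 1728*C/ℓ^2 + ℓ * Real.exp (-(δ/2) * ℓ) := by
    rw [abs_le]
    constructor
    · -- from the upper bound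
      have h := mul_le_mul_of_nonneg_left hIup hℓ.le
      have he : ℓ * (2/ℓ + 1728*C/ℓ^3 + Real.exp (-(δ/2) * ℓ))
          = 2 + 1728*C/ℓ^2 + ℓ * Real.exp (-(δ/2) * ℓ) := by
        field_simp
      rw [he] at h
      have := (Real.exp_pos (-ℓ/2)).le
      linarith
    · -- from the lower bound
      have h := mul_le_mul_of_nonneg_left hIlow hℓ.le
      have he : ℓ * (2/ℓ * (1 - Real.exp (-ℓ/2))) = 2 - 2 * Real.exp (-ℓ/2) := by
        field_simp
      rw [he] at h
      have h2 : (0:ℝ) ≤ 1728*C/ℓ^2 := by positivity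
      have h3 : (0:ℝ) ≤ ℓ * Real.exp (-(δ/2) * ℓ) := by positivity
      linarith
  have heq : (I ℓ)⁻¹ - ℓ/2 = (2 - ℓ * I ℓ) / (2 * I ℓ) := by
    field_simp
  rw [Real.norm_eq_abs, heq, abs_div, abs_of_pos (by positivity : (0:ℝ) < 2 * I ℓ)]
  have hinv : (2 * I ℓ)⁻¹ ≤ ℓ/2 := by
    have h1 : 2/ℓ ≤ 2 * I ℓ := by
      calc 2/ℓ = 2 * (1/ℓ) := by ring
        _ ≤ 2 * I ℓ := by linarith
    calc (2 * I ℓ)⁻¹ ≤ (2/ℓ)⁻¹ := by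
          apply inv_anti₀ (by positivity) h1
      _ = ℓ/2 := by field_simp
  calc |2 - ℓ * I ℓ| / (2 * I ℓ) = |2 - ℓ * I ℓ| * (2 * I ℓ)⁻¹ := div_eq_mul_inv _ _
    _ ≤ (2 * Real.exp (-ℓ/2) + 1728*C/ℓ^2 + ℓ * Real.exp (-(δ/2) * ℓ)) * (ℓ/2) := by
        apply mul_le_mul habs hinv (by positivity) (by positivity)
    _ ≤ B ℓ := by
        rw [hB]
        simp only
        have e1 : 2 * Real.exp (-ℓ/2) * (ℓ/2) = ℓ * Real.exp (-((1:ℝ)/2 * ℓ)) := by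
          rw [show -ℓ/2 = -((1:ℝ)/2 * ℓ) by ring]
          ring
        have e2 : 1728*C/ℓ^2 * (ℓ/2) = 864*C/ℓ := by
          field_simp
          ring
        have e3 : ℓ * Real.exp (-(δ/2) * ℓ) * (ℓ/2) = (1/2) * (ℓ^2 * Real.exp (-(δ/2 * ℓ))) := by
          rw [show -(δ/2) * ℓ = -(δ/2 * ℓ) by ring]
          ring
        rw [add_mul, add_mul, e1, e2, e3]

-- a useful cubic lower bound for sin on [0,1]
private lemma sin_cubic_lower {x : ℝ} (h0 : 0 ≤ x) (h1 : x ≤ 1) :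
    x - x ^ 3 / 4 ≤ Real.sin x := by
  rcases eq_or_lt_of_le h0 with h | h
  · simp [← h]
  · nlinarith [Real.sin_gt_sub_cube h, pow_nonneg h0 3]

/-- For every relative curvature `κ ∈ (−∞, 1]`, the magnitude
`|C_{ℓ,κ}| = (∫_0^1 exp(−ℓ·D_κ(s)) ds)⁻¹` of the circle of circumference `ℓ` with the
`κ`-metric, where `D_κ(s) = (1/(√κ·π)) arcsin(√κ sin(πs))` for `0 < κ ≤ 1`,
`D_0(s) = (1/π) sin(πs)`, and `D_κ(s) = (1/(√(−κ)·π)) arsinh(√(−κ) sin(πs))` for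
`κ < 0`, satisfies `|C_{ℓ,κ}| − ℓ/2 → 0` as `ℓ → ∞`. -/
theorem curved_circle_magnitude_asymptotics (D : ℝ → ℝ → ℝ)
    (hDpos : ∀ κ : ℝ, 0 < κ → κ ≤ 1 → ∀ s : ℝ,
      D κ s = (1 / (Real.sqrt κ * Real.pi)) * Real.arcsin (Real.sqrt κ * Real.sin (Real.pi * s)))
    (hD0 : ∀ s : ℝ, D 0 s = (1 / Real.pi) * Real.sin (Real.pi * s))
    (hDneg : ∀ κ : ℝ, κ < 0 → ∀ s : ℝ,
      D κ s = (1 / (Real.sqrt (-κ) * Real.pi)) *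
        Real.arsinh (Real.sqrt (-κ) * Real.sin (Real.pi * s))) :
    ∀ κ : ℝ, κ ≤ 1 →
      Tendsto (fun ℓ : ℝ => (∫ s in (0 : ℝ)..1, Real.exp (-ℓ * D κ s))⁻¹ - ℓ / 2)
        atTop (𝓝 0) := by
  intro κ hκ
  have hπ : (0:ℝ) < π := Real.pi_pos
  have hπ2 : (2:ℝ) ≤ π := Real.two_le_pi
  have hCbase : (1:ℝ) ≤ π^2/4 := by nlinarith
  rcases lt_trichotomy κ 0 with hneg | hzero | hpos
  · -- negative curvature
    set a : ℝ := Real.sqrt (-κ) with ha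
    have ha0 : 0 < a := Real.sqrt_pos.2 (by linarith)
    set F : ℝ → ℝ := fun y => 1 / (a * π) * Real.arsinh (a * y) with hF
    set C : ℝ := π^2/4 + a^2 * π^2/6 with hCdef
    have hC : (1:ℝ) ≤ C := by rw [hCdef]; nlinarith [sq_nonneg a]
    apply magnitude_limit (fun s => D κ s) F C hC
    · intro s
      exact hDneg κ hneg s
    · intro y₁ hy₁ y₂ hy₂ hy
      simp only [hF]
      apply mul_le_mul_of_nonneg_left _ (by positivity)
      exact Real.arsinh_le_arsinh.2 (mul_le_mul_of_nonneg_left hy ha0.le)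
    · exact continuous_const.mul (Real.continuous_arsinh.comp (continuous_const.mul continuous_id))
    · intro x hx0 hx2
      simp only [hF]
      have hs0 : 0 ≤ Real.sin x := Real.sin_nonneg_of_nonneg_of_le_pi hx0 (by linarith)
      have h1 : Real.arsinh (a * Real.sin x) ≤ a * Real.sin x := by
        have h := Real.self_le_sinh_iff.2 (Real.arsinh_nonneg_iff.2 (by positivity) :
          0 ≤ Real.arsinh (a * Real.sin x))
        rwa [Real.sinh_arsinh] at h
      have h2 : a * Real.sin x ≤ a * x :=
        mul_le_mul_of_nonneg_left (Real.sin_le hx0) ha0.le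
      calc 1 / (a * π) * Real.arsinh (a * Real.sin x) ≤ 1 / (a * π) * (a * x) :=
            mul_le_mul_of_nonneg_left (h1.trans h2) (by positivity)
        _ = x / π := by field_simp
    · intro x hx0 hx1
      simp only [hF]
      have hs0 : 0 ≤ Real.sin x := Real.sin_nonneg_of_nonneg_of_le_pi hx0 (by nlinarith)
      have hsle : Real.sin x ≤ x := Real.sin_le hx0
      have hcube : Real.sin x ^ 3 ≤ x ^ 3 := pow_le_pow_left₀ hs0 hsle 3
      have hlow := sin_cubic_lower hx0 hx1
      have harsinh := aux_arsinh_lower (mul_nonneg ha0.le hs0)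
      have step1 : 1 / (a * π) * (a * Real.sin x - (a * Real.sin x) ^ 3 / 6)
          ≤ 1 / (a * π) * Real.arsinh (a * Real.sin x) :=
        mul_le_mul_of_nonneg_left harsinh (by positivity)
      have e1 : 1 / (a * π) * (a * Real.sin x - (a * Real.sin x) ^ 3 / 6)
          = Real.sin x / π - a^2 * Real.sin x ^ 3 / (6*π) := by
        field_simp
      have e2 : x/π - C*(x/π)^3 = (x - x^3/4)/π - a^2 * x^3 / (6*π) := by
        rw [hCdef]
        field_simp
        ring
      rw [e2]
      rw [e1] at step1
      have s1 : (x - x^3/4)/π ≤ Real.sin x / π := by gcongr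
      have s2 : a^2 * Real.sin x ^ 3 / (6*π) ≤ a^2 * x^3 / (6*π) := by gcongr
      linarith
  · -- zero curvature
    subst hzero
    set F : ℝ → ℝ := fun y => 1 / π * y with hF
    apply magnitude_limit (fun s => D 0 s) F (π^2/4) hCbase
    · intro s
      exact hD0 s
    · intro y₁ hy₁ y₂ hy₂ hy
      simp only [hF]
      exact mul_le_mul_of_nonneg_left hy (by positivity)
    · exact continuous_const.mul continuous_id
    · intro x hx0 hx2
      simp only [hF]
      calc 1 / π * Real.sin x ≤ 1 / π * x :=
            mul_le_mul_of_nonneg_left (Real.sin_le hx0) (by positivity)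
        _ = x / π := by ring
    · intro x hx0 hx1
      simp only [hF]
      have hlow := sin_cubic_lower hx0 hx1
      have e2 : x/π - π^2/4*(x/π)^3 = (x - x^3/4)/π := by
        field_simp
      rw [e2]
      calc (x - x^3/4)/π ≤ Real.sin x / π := by gcongr
        _ = 1 / π * Real.sin x := by ring
  · -- positive curvature
    set a : ℝ := Real.sqrt κ with ha
    have ha0 : 0 < a := Real.sqrt_pos.2 hpos
    have ha1 : a ≤ 1 := by
      rw [ha, show (1:ℝ) = Real.sqrt 1 by simp]
      exact Real.sqrt_le_sqrt hκ
    set F : ℝ → ℝ := fun y => 1 / (a * π) * Real.arcsin (a * y) with hF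
    apply magnitude_limit (fun s => D κ s) F (π^2/4) hCbase
    · intro s
      exact hDpos κ hpos hκ s
    · intro y₁ hy₁ y₂ hy₂ hy
      simp only [hF]
      apply mul_le_mul_of_nonneg_left _ (by positivity)
      exact Real.monotone_arcsin (mul_le_mul_of_nonneg_left hy ha0.le)
    · exact continuous_const.mul (Real.continuous_arcsin.comp (continuous_const.mul continuous_id))
    · intro x hx0 hx2
      simp only [hF]
      have hs0 : 0 ≤ Real.sin x := Real.sin_nonneg_of_nonneg_of_le_pi hx0 (by linarith)
      have step1 : a * Real.sin x ≤ Real.sin (a * x) :=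
        aux_sin_concave ha0.le ha1 hx0 (by linarith)
      have step2 : Real.arcsin (a * Real.sin x) ≤ Real.arcsin (Real.sin (a * x)) :=
        Real.monotone_arcsin step1
      have step3 : Real.arcsin (Real.sin (a * x)) = a * x :=
        Real.arcsin_sin (by nlinarith) (by nlinarith)
      calc 1 / (a * π) * Real.arcsin (a * Real.sin x) ≤ 1 / (a * π) * (a * x) :=
            mul_le_mul_of_nonneg_left (step2.trans_eq step3) (by positivity)
        _ = x / π := by field_simp
    · intro x hx0 hx1
      simp only [hF]
      have hs0 : 0 ≤ Real.sin x := Real.sin_nonneg_of_nonneg_of_le_pi hx0 (by nlinarith)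
      have hs1 : a * Real.sin x ≤ 1 := by nlinarith [Real.sin_le_one x]
      have harc : a * Real.sin x ≤ Real.arcsin (a * Real.sin x) := by
        have hy0 : (0:ℝ) ≤ a * Real.sin x := by positivity
        conv_lhs => rw [← Real.sin_arcsin (by linarith : (-1:ℝ) ≤ a * Real.sin x) hs1]
        exact Real.sin_le (Real.arcsin_nonneg.2 hy0)
      have hlow := sin_cubic_lower hx0 hx1
      have step1 : 1 / (a * π) * (a * Real.sin x) ≤ 1 / (a * π) * Real.arcsin (a * Real.sin x) :=
        mul_le_mul_of_nonneg_left harc (by positivity)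
      have e1 : 1 / (a * π) * (a * Real.sin x) = Real.sin x / π := by
        field_simp
      have e2 : x/π - π^2/4*(x/π)^3 = (x - x^3/4)/π := by
        field_simp
      rw [e2]
      have s1 : (x - x^3/4)/π ≤ Real.sin x / π := by gcongr
      rw [e1] at step1
      linarith
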